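/- Let X_1, …, X_n ∈ {0,1} be binary random variables such that X_1 + ⋯ + X_n ≤ 1 always holds. Then X_1, …, X_n are negatively associated: for any two monotone increasing functions f, g defined on disjoint subsets of the variables, E[f·g] ≤ E[f]·E[g]. -/

import Mathlib

open MeasureTheory

/-- A function `f` on vectors depends only on coordinates in the set `S`. -/
def DependsOnCoords {ι : Type*} (f : (ι → ℝ) → ℝ) (S : Set ι) : Prop :=
  ∀ x y : ι → ℝ, (∀ i ∈ S, x i = y i) → f x = f y

/-- Random variables `X i` are negatively associated: every two monotone increasing
functions defined on disjoint subsets of the variables are negatively correlated. -/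
def NegAssoc {Ω ι : Type*} [MeasurableSpace Ω] (μ : Measure Ω) (X : ι → Ω → ℝ) : Prop :=
  ∀ (S T : Set ι), Disjoint S T →
    ∀ f g : (ι → ℝ) → ℝ, Monotone f → Monotone g → DependsOnCoords f S → DependsOnCoords g T →
      ∫ ω, f (fun i => X i ω) * g (fun i => X i ω) ∂μ ≤
        (∫ ω, f (fun i => X i ω) ∂μ) * ∫ ω, g (fun i => X i ω) ∂μ

lemma only_one {Ω : Type*} {n : ℕ} {X : Fin n → Ω → ℝ}
    (h01 : ∀ i ω, X i ω = 0 ∨ X i ω = 1)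
    (hsum : ∀ ω, ∑ i, X i ω ≤ 1) (ω : Ω) {j : Fin n} (hj : X j ω = 1) :
    ∀ k, k ≠ j → X k ω = 0 := by
  intro k hk
  rcases h01 k ω with h0 | h1
  · exact h0
  · exfalso
    have hXnn : ∀ i, 0 ≤ X i ω := by
      intro i; rcases h01 i ω with h | h <;> simp [h]
    have hsub : ({j, k} : Finset (Fin n)) ⊆ Finset.univ := Finset.subset_univ _
    have h2 := Finset.sum_le_sum_of_subset_of_nonneg hsub (fun i _ _ => hXnn i)
    rw [Finset.sum_pair (Ne.symm hk), hj, h1] at h2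
    linarith [hsum ω]

/-- Representation: `f` of the vector equals an affine function of the `X j`. -/
lemma rep_lemma {Ω : Type*} {n : ℕ} {X : Fin n → Ω → ℝ}
    (h01 : ∀ i ω, X i ω = 0 ∨ X i ω = 1)
    (hsum : ∀ ω, ∑ i, X i ω ≤ 1) (f : (Fin n → ℝ) → ℝ) (ω : Ω) :
    f (fun i => X i ω) = f 0 + ∑ j, (f (Pi.single j 1) - f 0) * X j ω := by
  classical
  by_cases h : ∀ i, X i ω = 0
  · have hv : (fun i => X i ω) = 0 := funext fun i => h i
    rw [hv]
    rw [Finset.sum_eq_zero]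
    · ring
    · intro j _; rw [h j]; ring
  · push_neg at h
    obtain ⟨j, hj⟩ := h
    have hj1 : X j ω = 1 := (h01 j ω).resolve_left hj
    have hv : (fun i => X i ω) = Pi.single j 1 := by
      funext i
      by_cases hij : i = j
      · subst hij; rw [hj1, Pi.single_eq_same]
      · rw [only_one h01 hsum ω hj1 i hij, Pi.single_eq_of_ne hij]
    rw [hv]
    rw [Finset.sum_eq_single j]
    · rw [hj1]; ring
    · intro k _ hkj; rw [only_one h01 hsum ω hj1 k hkj]; ring
    · intro hn; exact absurd (Finset.mem_univ j) hn

/-- 0-1 principle: binary random variables whose sum is always at most 1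
are negatively associated. -/
theorem zero_one_principle_NA
    {Ω : Type*} [MeasurableSpace Ω] (μ : Measure Ω) [IsProbabilityMeasure μ]
    (n : ℕ) (X : Fin n → Ω → ℝ)
    (hmeas : ∀ i, Measurable (X i))
    (h01 : ∀ i ω, X i ω = 0 ∨ X i ω = 1)
    (hsum : ∀ ω, ∑ i, X i ω ≤ 1) :
    NegAssoc μ X := by
  classical
  intro S T hST f g hf hg hfS hgT
  set F : Ω → ℝ := fun ω => f (fun i => X i ω) with hFdef
  set G : Ω → ℝ := fun ω => g (fun i => X i ω) with hGdef
  set a : ℝ := f 0 with hadef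
  set b : ℝ := g 0 with hbdef
  have hXnn : ∀ i ω, 0 ≤ X i ω := by
    intro i ω; rcases h01 i ω with h | h <;> simp [h]
  -- integrability of the X j
  have hXint : ∀ j, Integrable (X j) μ := by
    intro j
    refine Integrable.mono' (integrable_const (1 : ℝ)) (hmeas j).aestronglyMeasurable ?_
    filter_upwards with ω
    rcases h01 j ω with h | h <;> simp [h]
  -- integrability of F and G
  have hFrep : F = fun ω => a + ∑ j, (f (Pi.single j 1) - a) * X j ω :=
    funext fun ω => rep_lemma h01 hsum f ω
  have hGrep : G = fun ω => b + ∑ j, (g (Pi.single j 1) - b) * X j ω :=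
    funext fun ω => rep_lemma h01 hsum g ω
  have hFint : Integrable F μ := by
    rw [hFrep]
    exact (integrable_const a).add (integrable_finset_sum _ fun j _ => (hXint j).const_mul _)
  have hGint : Integrable G μ := by
    rw [hGrep]
    exact (integrable_const b).add (integrable_finset_sum _ fun j _ => (hXint j).const_mul _)
  -- pointwise lower bounds
  have hFa : ∀ ω, a ≤ F ω := by
    intro ω
    exact hf (fun i => hXnn i ω)
  have hGb : ∀ ω, b ≤ G ω := by
    intro ω
    exact hg (fun i => hXnn i ω)
  -- the key zero-product identity
  have hkey : ∀ ω, (F ω - a) * (G ω - b) = 0 := by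
    intro ω
    by_cases h : ∀ i, X i ω = 0
    · have hv : (fun i => X i ω) = 0 := funext fun i => h i
      have : F ω = a := by rw [hFdef]; simp only [hv]; rfl
      rw [this]; ring
    · push_neg at h
      obtain ⟨j, hj⟩ := h
      have hj1 : X j ω = 1 := (h01 j ω).resolve_left hj
      have hdisj : j ∉ S ∨ j ∉ T := by
        by_contra hc
        push_neg at hc
        exact Set.disjoint_left.mp hST hc.1 hc.2
      rcases hdisj with hjS | hjT
      · have : F ω = a := by
          refine hfS _ 0 ?_
          intro i hi
          have hij : i ≠ j := fun hij => hjS (hij ▸ hi)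
          simpa using only_one h01 hsum ω hj1 i hij
        rw [this]; ring
      · have : G ω = b := by
          refine hgT _ 0 ?_
          intro i hi
          have hij : i ≠ j := fun hij => hjT (hij ▸ hi)
          simpa using only_one h01 hsum ω hj1 i hij
        rw [this]; ring
  have hprod : ∀ ω, F ω * G ω = a * G ω + b * F ω - a * b := by
    intro ω
    linear_combination hkey ω
  have hint : ∫ ω, F ω * G ω ∂μ = a * ∫ ω, G ω ∂μ + b * ∫ ω, F ω ∂μ - a * b := by
    rw [show (fun ω => F ω * G ω) = fun ω => (a * G ω + b * F ω) - a * b from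
      funext fun ω => by rw [hprod ω]]
    have hadd : ∫ ω, (a * G ω + b * F ω) ∂μ
        = a * ∫ ω, G ω ∂μ + b * ∫ ω, F ω ∂μ := by
      rw [integral_add (hGint.const_mul a) (hFint.const_mul b),
        integral_const_mul, integral_const_mul]
    have hI : Integrable (fun ω => a * G ω + b * F ω) μ := by
      exact (hGint.const_mul a).add (hFint.const_mul b)
    rw [integral_sub hI (integrable_const _), hadd, integral_const]
    simp
  have hA : a ≤ ∫ ω, F ω ∂μ := by
    calc a = ∫ _, a ∂μ := by simp
    _ ≤ ∫ ω, F ω ∂μ := integral_mono (integrable_const a) hFint hFa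
  have hB : b ≤ ∫ ω, G ω ∂μ := by
    calc b = ∫ _, b ∂μ := by simp
    _ ≤ ∫ ω, G ω ∂μ := integral_mono (integrable_const b) hGint hGb
  rw [hint]
  nlinarith [mul_nonneg (sub_nonneg.2 hA) (sub_nonneg.2 hB)]
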